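/- Fix q ≥ 2 and 0 < β < (q-1)/q. If every q-ary string of length n can be generated from some root by at most f steps of β-approximate duplication, then q!·q·f·n^{3f}·q^{H_q(β)n} ≥ q^n, where H_q is the q-ary entropy function. -/

import Mathlib

open scoped BigOperators

/-- One duplication-with-transposition step: `x = a·b·c·d → y = a·b·c·b·d`, `b` non-empty. -/
def DupStep {q : ℕ} (x y : List (Fin q)) : Prop :=
  ∃ a b c d : List (Fin q), b ≠ [] ∧ x = a ++ b ++ c ++ d ∧ y = a ++ b ++ c ++ b ++ d

/-- `DupPath m x y` : `y` is obtained from `x` by exactly `m` duplication steps. -/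
def DupPath {q : ℕ} : ℕ → List (Fin q) → List (Fin q) → Prop
  | 0, x, y => x = y
  | n + 1, x, y => ∃ z, DupStep x z ∧ DupPath n z y

/-- Hamming distance between two lists (of equal length in intended use). -/
def listHammingDist {q : ℕ} (b b' : List (Fin q)) : ℕ :=
  ((b.zip b').filter fun p => decide (p.1 ≠ p.2)).length

/-- One β-approximate duplication-with-transposition step. -/
def ApproxStep {q : ℕ} (β : ℝ) (x y : List (Fin q)) : Prop :=
  ∃ a b c bh d : List (Fin q), b ≠ [] ∧ bh.length = b.length ∧
    (listHammingDist b bh : ℝ) ≤ β * b.length ∧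
    x = a ++ b ++ c ++ d ∧ y = a ++ b ++ c ++ bh ++ d

/-- `ApproxPath β m x y` : `y` obtained from `x` by exactly `m` β-approximate duplications. -/
def ApproxPath {q : ℕ} (β : ℝ) : ℕ → List (Fin q) → List (Fin q) → Prop
  | 0, x, y => x = y
  | n + 1, x, y => ∃ z, ApproxStep β x z ∧ ApproxPath β n z y

/-- The root of a string: the subsequence of first occurrences of symbols. -/
def firstOccs {q : ℕ} (l : List (Fin q)) : List (Fin q) :=
  l.foldl (fun acc a => if a ∈ acc then acc else acc ++ [a]) []

namespace Stmt13Aux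

variable {q : ℕ}


variable {q : ℕ}

/-- Encode the change from symbol `a` to `a'` as an element of `Option (Fin (q-1))`. -/
def encodeSym (a a' : Fin q) : Option (Fin (q - 1)) :=
  if h1 : (a' : ℕ) = (a : ℕ) then none
  else if h2 : (a' : ℕ) < (a : ℕ) then
    some ⟨(a' : ℕ), by have := a.isLt; have := a'.isLt; omega⟩
  else some ⟨(a' : ℕ) - 1, by have := a.isLt; have := a'.isLt; omega⟩

/-- Apply an encoded change to a symbol. -/
def applySym (a : Fin q) : Option (Fin (q - 1)) → Fin q
  | none => a
  | some i =>
    if _ : (i : ℕ) < (a : ℕ) then ⟨(i : ℕ), by have := a.isLt; omega⟩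
    else ⟨(i : ℕ) + 1, by have := i.isLt; omega⟩

lemma applySym_encodeSym (a a' : Fin q) : applySym a (encodeSym a a') = a' := by
  by_cases h1 : (a' : ℕ) = (a : ℕ)
  · simp [encodeSym, applySym, h1, Fin.ext_iff]
  · by_cases h2 : (a' : ℕ) < (a : ℕ)
    · simp [encodeSym, applySym, h1, h2, Fin.ext_iff]
    · have h3 : ¬((a' : ℕ) - 1 < (a : ℕ)) := by omega
      simp [encodeSym, applySym, h1, h2, h3, Fin.ext_iff]
      omega

lemma zipWith_applySym_encodeSym : ∀ (b bh : List (Fin q)), bh.length = b.length →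
    List.zipWith applySym b (List.zipWith encodeSym b bh) = bh
  | [], [], _ => rfl
  | a :: b, a' :: bh, h => by
    simp only [List.zipWith_cons_cons, applySym_encodeSym, List.cons.injEq, true_and]
    exact zipWith_applySym_encodeSym b bh (by simpa using h)

/-- number of `some`s in a diff list -/
def cnt (l : List (Option (Fin (q - 1)))) : ℕ := l.countP (·.isSome)

lemma cnt_zipWith_encodeSym : ∀ (b bh : List (Fin q)),
    cnt (List.zipWith encodeSym b bh) = listHammingDist b bh
  | [], bh => by simp [cnt, listHammingDist]
  | a :: b, [] => by simp [cnt, listHammingDist]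
  | a :: b, a' :: bh => by
    have ih := cnt_zipWith_encodeSym b bh
    simp only [cnt, listHammingDist, List.zipWith_cons_cons, List.countP_cons,
      List.zip_cons_cons, List.filter_cons] at *
    by_cases h : (a' : ℕ) = (a : ℕ)
    · have : a = a' := Fin.ext h.symm
      simp [encodeSym, h, this, ih]
    · have hne : ¬ a = a' := fun hc => h (by rw [hc])
      by_cases h2 : (a' : ℕ) < (a : ℕ) <;>
        simp [encodeSym, h, h2, hne, ih, List.length_cons]

lemma cnt_append (l₁ l₂ : List (Option (Fin (q - 1)))) :
    cnt (l₁ ++ l₂) = cnt l₁ + cnt l₂ := List.countP_append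

lemma cnt_replicate_none (k : ℕ) : cnt (List.replicate k (none : Option (Fin (q - 1)))) = 0 := by
  induction k with
  | zero => rfl
  | succ k ih => simpa [cnt, List.replicate_succ, List.countP_cons] using ih

lemma cnt_le_length (l : List (Option (Fin (q - 1)))) : cnt l ≤ l.length :=
  List.countP_le_length





/-- One decoding step. -/
def stepFold (n : ℕ) (s : List (Fin q) × List (Option (Fin (q - 1))))
    (st : ℕ × ℕ × ℕ) : List (Fin q) × List (Option (Fin (q - 1))) :=
  if st.1 = n - 1 ∧ st.2.1 = n - 1 ∧ st.2.2 = n - 1 then s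
  else
    let p := st.1
    let l := st.2.1 + 1
    let t := st.2.2
    let b := (s.1.drop p).take l
    let bh := List.zipWith applySym b (s.2.take l)
    (s.1.take (p + l + t) ++ bh ++ s.1.drop (p + l + t), s.2.drop l)

def decodeL (n : ℕ) (L : List (ℕ × ℕ × ℕ))
    (s : List (Fin q) × List (Option (Fin (q - 1)))) :
    List (Fin q) × List (Option (Fin (q - 1))) :=
  L.foldl (stepFold n) s

lemma decodeL_sentinel (n k : ℕ) (s : List (Fin q) × List (Option (Fin (q - 1)))) :
    decodeL n (List.replicate k (n - 1, n - 1, n - 1)) s = s := by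
  induction k generalizing s with
  | zero => rfl
  | succ k ih =>
    rw [List.replicate_succ]
    show decodeL n _ (stepFold n s _) = s
    rw [stepFold, if_pos ⟨rfl, rfl, rfl⟩]
    exact ih s

lemma decodeL_append (n : ℕ) (L₁ L₂ : List (ℕ × ℕ × ℕ))
    (s : List (Fin q) × List (Option (Fin (q - 1)))) :
    decodeL n (L₁ ++ L₂) s = decodeL n L₂ (decodeL n L₁ s) :=
  List.foldl_append ..

lemma approxPath_length_le (β : ℝ) : ∀ (m : ℕ) (x v : List (Fin q)),
    ApproxPath β m x v → x.length ≤ v.length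
  | 0, x, v, h => le_of_eq (by rw [h])
  | m + 1, x, v, h => by
    obtain ⟨z, ⟨a, b, c, bh, d, hb, hlen, hham, hx, hz⟩, hpath⟩ := h
    have h1 : x.length ≤ z.length := by
      subst hx hz; simp [List.length_append]
    exact h1.trans (approxPath_length_le β m z v hpath)

lemma decode_spec (β : ℝ) (n : ℕ) : ∀ (m : ℕ) (x v : List (Fin q)),
    ApproxPath β m x v → v.length ≤ n →
    ∃ (L : List (ℕ × ℕ × ℕ)) (gs : List (Option (Fin (q - 1)))),
      L.length = m ∧ gs.length = v.length - x.length ∧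
      (cnt gs : ℝ) ≤ β * ((v.length : ℝ) - (x.length : ℝ)) ∧
      (∀ s ∈ L, s.1 < n - 1 ∧ s.2.1 < n - 1 ∧ s.2.2 < n - 1) ∧
      ∀ e, decodeL n L (x, gs ++ e) = (v, e)
  | 0, x, v, h, _ => by
    obtain rfl : x = v := h
    exact ⟨[], [], rfl, by simp, by simp [cnt], by simp, fun e => by simp [decodeL]⟩
  | m + 1, x, v, h, hvn => by
    obtain ⟨z, ⟨a, b, c, bh, d, hb, hlen, hham, hx, hz⟩, hpath⟩ := h
    obtain ⟨L', gs', hL'len, hgs'len, hcnt', hbd', hfold'⟩ :=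
      decode_spec β n m z v hpath hvn
    have hzv : z.length ≤ v.length := approxPath_length_le β m z v hpath
    have hl1 : 1 ≤ b.length := List.length_pos_iff.mpr hb
    have hxlen : x.length = a.length + b.length + c.length + d.length := by
      subst hx; simp [List.length_append]; omega
    have hzlen : z.length = x.length + b.length := by
      subst hx hz; simp [List.length_append, hlen]; omega
    have hbounds : a.length < n - 1 ∧ b.length - 1 < n - 1 ∧ c.length < n - 1 := by
      omega
    set δ : List (Option (Fin (q - 1))) := List.zipWith encodeSym b bh with hδ
    have hδlen : δ.length = b.length := by simp [hδ, hlen]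
    refine ⟨(a.length, b.length - 1, c.length) :: L', δ ++ gs', by simp [hL'len], ?_, ?_, ?_, ?_⟩
    · simp only [List.length_append, hδlen, hgs'len]; omega
    · rw [cnt_append, cnt_zipWith_encodeSym]
      have h1 : (cnt gs' : ℝ) ≤ β * ((v.length : ℝ) - (z.length : ℝ)) := hcnt'
      have h2 : ((z.length : ℝ)) = (x.length : ℝ) + (b.length : ℝ) := by
        exact_mod_cast congrArg (Nat.cast : ℕ → ℝ) hzlen
      have h3 : β * ((v.length : ℝ) - (z.length : ℝ))
          = β * ((v.length : ℝ) - (x.length : ℝ)) - β * (b.length : ℝ) := by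
        rw [h2]; ring
      push_cast
      linarith
    · intro s hs
      rcases List.mem_cons.mp hs with rfl | hs
      · exact hbounds
      · exact hbd' s hs
    · intro e
      show decodeL n L' (stepFold n (x, (δ ++ gs') ++ e) (a.length, b.length - 1, c.length))
          = (v, e)
      have hstep : stepFold n (x, (δ ++ gs') ++ e) (a.length, b.length - 1, c.length)
          = (z, gs' ++ e) := by
        rw [stepFold, if_neg (by omega)]
        have hbl : b.length - 1 + 1 = b.length := by omega
        simp only [hbl]
        have e1 : (x.drop a.length).take b.length = b := by
          subst hx
          rw [show a ++ b ++ c ++ d = a ++ (b ++ (c ++ d)) by simp [List.append_assoc],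
            List.drop_left, List.take_left]
        have e2 : ((δ ++ gs') ++ e).take b.length = δ := by
          rw [List.append_assoc, List.take_left' hδlen]
        have e3 : x.take (a.length + b.length + c.length) = a ++ b ++ c := by
          subst hx
          rw [List.take_left' (by simp [List.length_append]; omega)]
        have e4 : x.drop (a.length + b.length + c.length) = d := by
          subst hx
          rw [List.drop_left' (by simp [List.length_append]; omega)]
        have e5 : ((δ ++ gs') ++ e).drop b.length = gs' ++ e := by
          rw [List.append_assoc, List.drop_left' hδlen]
        rw [e1, e2, e3, e4, e5, zipWith_applySym_encodeSym b bh hlen, hz]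
      rw [hstep]
      exact hfold' e




lemma exists_perm_take (r : List (Fin q)) (h0 : r ≠ []) (hnd : r.Nodup) :
    ∃ (σ : Equiv.Perm (Fin q)) (j : Fin q),
      (List.ofFn ⇑σ).take ((j : ℕ) + 1) = r := by
  classical
  have hq : 0 < q := by
    rcases List.exists_mem_of_ne_nil r h0 with ⟨x, _⟩
    exact x.pos
  set s : List (Fin q) := r ++ (List.finRange q).filter (fun x => x ∉ r) with hs
  have hnds : s.Nodup := by
    refine List.Nodup.append hnd ((List.nodup_finRange q).filter _) ?_
    intro x hx hx2
    rcases List.mem_filter.mp hx2 with ⟨_, h2⟩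
    exact absurd hx (by simpa using h2)
  have hmem : ∀ x : Fin q, x ∈ s := by
    intro x
    by_cases h : x ∈ r
    · exact List.mem_append.mpr (Or.inl h)
    · exact List.mem_append.mpr (Or.inr (List.mem_filter.mpr
        ⟨List.mem_finRange x, by simpa using h⟩))
  have hslen : s.length = q := by
    have h1 : s.toFinset.card = s.length := List.toFinset_card_of_nodup hnds
    have h2 : s.toFinset = Finset.univ := by
      apply Finset.eq_univ_iff_forall.mpr
      intro x; exact List.mem_toFinset.mpr (hmem x)
    rw [h2] at h1
    simpa [Fintype.card_fin] using h1.symm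
  have hinj : Function.Injective (fun i : Fin q => s.get (Fin.cast hslen.symm i)) := by
    intro i j hij
    have := List.nodup_iff_injective_get.mp hnds hij
    exact Fin.cast_injective _ this
  refine ⟨Equiv.ofBijective _ (Finite.injective_iff_bijective.mp hinj), ?_, ?_⟩
  · have hk : r.length ≤ q := by
      have := hnd.length_le_card
      simpa [Fintype.card_fin] using this
    have hk1 : 1 ≤ r.length := List.length_pos_iff.mpr h0
    exact ⟨r.length - 1, by omega⟩
  · have hofn : List.ofFn (⇑(Equiv.ofBijective _ (Finite.injective_iff_bijective.mp hinj))) = s := by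
      apply List.ext_getElem (by simp [hslen])
      intro i h1 h2
      simp [List.getElem_ofFn, Equiv.ofBijective, List.get_eq_getElem]
    rw [hofn]
    have hk1 : 1 ≤ r.length := List.length_pos_iff.mpr h0
    have : r.length - 1 + 1 = r.length := by omega
    simp only [this]
    exact List.take_left' rfl





/-- weight of a diff symbol -/
noncomputable def wt (q : ℕ) (β : ℝ) : Option (Fin (q - 1)) → ℝ
  | none => 1 - β
  | some _ => β / ((q : ℝ) - 1)

lemma prod_wt (β : ℝ) : ∀ l : List (Option (Fin (q - 1))),
    (l.map (wt q β)).prod = (β / ((q : ℝ) - 1)) ^ (cnt l) * (1 - β) ^ (l.length - cnt l)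
  | [] => by simp [cnt]
  | a :: l => by
    have ih := prod_wt β l
    have hle := cnt_le_length l
    cases a with
    | none =>
      have h1 : cnt ((none : Option (Fin (q-1))) :: l) = cnt l := by
        simp [cnt, List.countP_cons]
      have h2 : ((none : Option (Fin (q-1))) :: l).length - cnt l = (l.length - cnt l) + 1 := by
        simp only [List.length_cons]; omega
      rw [List.map_cons, List.prod_cons, ih, h1, h2]
      show (1 - β) * _ = _
      ring
    | some i =>
      have h1 : cnt (some i :: l) = cnt l + 1 := by
        simp [cnt, List.countP_cons]
      have h2 : (some i :: l).length - cnt (some i :: l) = l.length - cnt l := by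
        simp only [List.length_cons, h1]; omega
      rw [List.map_cons, List.prod_cons, ih, h2, h1]
      show (β / ((q : ℝ) - 1)) * _ = _
      ring

theorem ball_card_le (n : ℕ) (hq : 2 ≤ q) (β Hq : ℝ) (hβ0 : 0 < β)
    (hβ1 : β < ((q : ℝ) - 1) / q)
    (hHq : Hq = -β * Real.logb q β - (1 - β) * Real.logb q (1 - β)
        + β * Real.logb q ((q : ℝ) - 1)) :
    (Fintype.card {gs : List.Vector (Option (Fin (q - 1))) n //
        cnt gs.toList ≤ ⌊β * n⌋₊} : ℝ) ≤ (q : ℝ) ^ (Hq * n) := by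
  have hq1 : (1 : ℝ) < q := by exact_mod_cast hq.trans_lt' one_lt_two
  have hq0 : (0 : ℝ) < q := by linarith
  have hqm1 : (0 : ℝ) < (q : ℝ) - 1 := by linarith
  have hdivlt : ((q : ℝ) - 1) / q < 1 := by
    rw [div_lt_one hq0]; linarith
  have hβlt1 : β < 1 := hβ1.trans hdivlt
  have h1β : (0 : ℝ) < 1 - β := by linarith
  have hkey : β ≤ ((q : ℝ) - 1) * (1 - β) := by
    have := (lt_div_iff₀ hq0).mp hβ1
    nlinarith
  set K := ⌊β * n⌋₊ with hK
  set W : List.Vector (Option (Fin (q - 1))) n → ℝ :=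
    fun gs => ((gs.toList.map (wt q β)).prod) with hW
  -- each W is nonneg
  have hWpos : ∀ gs, 0 ≤ W gs := by
    intro gs
    show 0 ≤ (gs.toList.map (wt q β)).prod
    rw [prod_wt]
    positivity
  -- pointwise bound
  have hpoint : ∀ gs : List.Vector (Option (Fin (q - 1))) n, cnt gs.toList ≤ K →
      (1 : ℝ) ≤ (q : ℝ) ^ (Hq * n) * W gs := by
    intro gs hc
    set c := cnt gs.toList with hc'
    have hcn : c ≤ n := by
      simpa [List.Vector.toList_length] using cnt_le_length gs.toList
    have hcβ : (c : ℝ) ≤ β * n := by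
      calc (c : ℝ) ≤ (K : ℝ) := by exact_mod_cast hc
        _ ≤ β * n := Nat.floor_le (by positivity)
    show (1 : ℝ) ≤ (q : ℝ) ^ (Hq * (n : ℝ)) * (gs.toList.map (wt q β)).prod
    rw [prod_wt, List.Vector.toList_length, ← hc']
    set Lβ := Real.logb q β with hLβ
    set L1 := Real.logb q (1 - β) with hL1
    set Lq := Real.logb q ((q : ℝ) - 1) with hLq
    have e1 : β / ((q : ℝ) - 1) = (q : ℝ) ^ (Lβ - Lq) := by
      rw [hLβ, hLq, ← Real.logb_div (ne_of_gt hβ0) (ne_of_gt hqm1),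
        Real.rpow_logb hq0 (ne_of_gt hq1) (by positivity)]
    have e2 : 1 - β = (q : ℝ) ^ L1 := by
      rw [hL1, Real.rpow_logb hq0 (ne_of_gt hq1) h1β]
    rw [e1, e2, ← Real.rpow_natCast ((q:ℝ) ^ (Lβ - Lq)) c,
      ← Real.rpow_natCast ((q:ℝ) ^ L1) (n - c),
      ← Real.rpow_mul (le_of_lt hq0), ← Real.rpow_mul (le_of_lt hq0),
      ← Real.rpow_add hq0, ← Real.rpow_add hq0]
    have hncast : ((n - c : ℕ) : ℝ) = (n : ℝ) - c := by
      push_cast [Nat.cast_sub hcn]; ring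
    rw [hncast]
    have hE : Hq * n + ((Lβ - Lq) * c + L1 * ((n : ℝ) - c))
        = (β * n - c) * (Lq + L1 - Lβ) := by
      rw [hHq, hLβ, hL1, hLq]; ring
    have hfac2 : 0 ≤ Lq + L1 - Lβ := by
      have hmul : Lq + L1 = Real.logb q (((q : ℝ) - 1) * (1 - β)) := by
        rw [hLq, hL1, Real.logb_mul (ne_of_gt hqm1) (ne_of_gt h1β)]
      rw [sub_nonneg, hmul, hLβ]
      exact Real.logb_le_logb_of_le hq1 hβ0 hkey
    have hE0 : 0 ≤ Hq * n + ((Lβ - Lq) * c + L1 * ((n : ℝ) - c)) := by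
      rw [hE]
      apply mul_nonneg (by linarith) hfac2
    calc (1 : ℝ) = (q : ℝ) ^ (0 : ℝ) := by rw [Real.rpow_zero]
      _ ≤ (q : ℝ) ^ (Hq * n + ((Lβ - Lq) * c + L1 * ((n : ℝ) - c))) :=
        Real.rpow_le_rpow_of_exponent_le (le_of_lt hq1) hE0
      _ = _ := by rw [Real.rpow_add hq0]
  -- total weight is one
  have hsum : ∑ gs : List.Vector (Option (Fin (q - 1))) n, W gs = 1 := by
    have hre : ∑ gs : List.Vector (Option (Fin (q - 1))) n, W gs
        = ∑ g : Fin n → Option (Fin (q - 1)), ∏ i, wt q β (g i) := by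
      rw [← Equiv.sum_comp (Equiv.vectorEquivFin (Option (Fin (q - 1))) n).symm W]
      apply Finset.sum_congr rfl
      intro g _
      show ((List.Vector.ofFn g).toList.map (wt q β)).prod = _
      simp only [List.Vector.toList_ofFn, List.map_ofFn, List.prod_ofFn]
      rfl
    rw [hre, ← Fintype.prod_sum (fun (_ : Fin n) (δ : Option (Fin (q - 1))) => wt q β δ)]
    have hone : ∑ δ : Option (Fin (q - 1)), wt q β δ = 1 := by
      rw [Fintype.sum_option]
      simp only [wt, Finset.sum_const, Finset.card_univ, Fintype.card_fin, nsmul_eq_mul]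
      have : ((q - 1 : ℕ) : ℝ) = (q : ℝ) - 1 := by
        push_cast [Nat.cast_sub (by omega : 1 ≤ q)]; ring
      rw [this]
      field_simp
      ring
    rw [Finset.prod_congr rfl (fun i _ => hone)]
    simp
  -- put it together
  calc (Fintype.card {gs : List.Vector (Option (Fin (q - 1))) n //
        cnt gs.toList ≤ K} : ℝ)
      = ∑ gs : List.Vector (Option (Fin (q - 1))) n,
          (if cnt gs.toList ≤ K then (1 : ℝ) else 0) := by
        rw [Fintype.card_subtype, Finset.card_filter]
        push_cast
        rfl
    _ ≤ ∑ gs : List.Vector (Option (Fin (q - 1))) n, (q : ℝ) ^ (Hq * n) * W gs := by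
        apply Finset.sum_le_sum
        intro gs _
        by_cases hc : cnt gs.toList ≤ K
        · rw [if_pos hc]; exact hpoint gs hc
        · rw [if_neg hc]
          exact mul_nonneg (Real.rpow_nonneg (le_of_lt hq0) _) (hWpos gs)
    _ = (q : ℝ) ^ (Hq * n) := by
        rw [← Finset.mul_sum, hsum, mul_one]


/-- The decoding map from descriptions to vectors. -/
def decodeD (q n f K : ℕ) (hq : 0 < q)
    (d : Equiv.Perm (Fin q) × Fin q × List.Vector (Fin n × Fin n × Fin n) f ×
      {gs : List.Vector (Option (Fin (q - 1))) n // cnt gs.toList ≤ K}) :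
    List.Vector (Fin q) n :=
  if h : (decodeL n (d.2.2.1.toList.map fun s => ((s.1 : ℕ), (s.2.1 : ℕ), (s.2.2 : ℕ)))
      ((List.ofFn ⇑d.1).take ((d.2.1 : ℕ) + 1), d.2.2.2.1.toList)).1.length = n
  then ⟨_, h⟩ else ⟨List.replicate n ⟨0, hq⟩, by simp⟩

lemma decodeD_surjective (q n f : ℕ) (hq : 0 < q) (hn : 0 < n) (β : ℝ) (hβ0 : 0 ≤ β)
    (hgen : ∀ v : List (Fin q), v.length = n →
      ∃ (r : List (Fin q)) (m : ℕ), r ≠ [] ∧ r.Nodup ∧ m ≤ f ∧ ApproxPath β m r v) :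
    Function.Surjective (decodeD q n f ⌊β * n⌋₊ hq) := by
  intro v
  obtain ⟨r, m, hr0, hrnd, hmf, hpath⟩ := hgen v.toList (by simp)
  obtain ⟨L, gs, hLlen, hgslen, hcnt, hbd, hfold⟩ :=
    decode_spec β n m r v.toList hpath (by simp)
  obtain ⟨σ, j, hσ⟩ := exists_perm_take r hr0 hrnd
  have hrv : r.length ≤ v.toList.length := approxPath_length_le β m r v.toList hpath
  have hvn : v.toList.length = n := by simp
  have hr1 : 1 ≤ r.length := List.length_pos_iff.mpr hr0
  set pad := n - gs.length with hpad
  have hgsf_len : (gs ++ List.replicate pad (none : Option (Fin (q - 1)))).length = n := by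
    simp only [List.length_append, List.length_replicate, hpad]
    omega
  have hcnt_full : cnt (gs ++ List.replicate pad (none : Option (Fin (q - 1)))) ≤ ⌊β * n⌋₊ := by
    rw [cnt_append, cnt_replicate_none, Nat.add_zero]
    apply Nat.le_floor
    calc (cnt gs : ℝ) ≤ β * ((v.toList.length : ℝ) - (r.length : ℝ)) := hcnt
      _ ≤ β * n := by
          apply mul_le_mul_of_nonneg_left _ hβ0
          rw [hvn]
          have : (0 : ℝ) ≤ (r.length : ℝ) := Nat.cast_nonneg _
          linarith
  set natL := L ++ List.replicate (f - m) (n - 1, n - 1, n - 1) with hnatL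
  have hnatL_len : natL.length = f := by
    simp only [hnatL, List.length_append, List.length_replicate, hLlen]
    omega
  have hbound : ∀ s ∈ natL, s.1 < n ∧ s.2.1 < n ∧ s.2.2 < n := by
    intro s hs
    rcases List.mem_append.mp hs with h | h
    · obtain ⟨h1, h2, h3⟩ := hbd s h; omega
    · rw [List.eq_of_mem_replicate h]
      refine ⟨?_, ?_, ?_⟩ <;> · show n - 1 < n; omega
  refine ⟨(σ, j, ⟨natL.map (fun s =>
      ((⟨s.1 % n, Nat.mod_lt _ hn⟩ : Fin n),
       (⟨s.2.1 % n, Nat.mod_lt _ hn⟩ : Fin n),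
       (⟨s.2.2 % n, Nat.mod_lt _ hn⟩ : Fin n))),
      by simp [hnatL_len]⟩,
      ⟨⟨gs ++ List.replicate pad (none : Option (Fin (q - 1))), hgsf_len⟩, hcnt_full⟩), ?_⟩
  have hLrec : ((natL.map (fun s =>
      ((⟨s.1 % n, Nat.mod_lt _ hn⟩ : Fin n),
       (⟨s.2.1 % n, Nat.mod_lt _ hn⟩ : Fin n),
       (⟨s.2.2 % n, Nat.mod_lt _ hn⟩ : Fin n)))).map
        (fun s => ((s.1 : ℕ), (s.2.1 : ℕ), (s.2.2 : ℕ)))) = natL := by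
    rw [List.map_map]
    conv_rhs => rw [← List.map_id natL]
    apply List.map_congr_left
    intro s hs
    obtain ⟨h1, h2, h3⟩ := hbound s hs
    simp [Nat.mod_eq_of_lt h1, Nat.mod_eq_of_lt h2, Nat.mod_eq_of_lt h3]
  have hres : decodeL n natL (r, gs ++ List.replicate pad (none : Option (Fin (q - 1))))
      = (v.toList, List.replicate pad (none : Option (Fin (q - 1)))) := by
    rw [hnatL, decodeL_append, hfold (List.replicate pad (none : Option (Fin (q - 1)))),
      decodeL_sentinel]
  simp only [decodeD, List.Vector.toList_mk, hLrec, hσ, hres]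
  exact dif_pos (by rw [hLrec, hσ, hres]; simp)

end Stmt13Aux

/-- if every `q`-ary string of length `n` is generated from some
root by at most `f` β-approximate duplications, then
`q!·q·f·n^{3f}·q^{H_q(β)n} ≥ q^n`. -/
theorem stmt13 (q n f : ℕ) (hq : 2 ≤ q) (hn : 1 ≤ n) (hf : 1 ≤ f) (β : ℝ)
    (hβ0 : 0 < β) (hβ1 : β < ((q : ℝ) - 1) / q)
    (Hq : ℝ)
    (hHq : Hq = -β * Real.logb q β - (1 - β) * Real.logb q (1 - β)
        + β * Real.logb q ((q : ℝ) - 1))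
    (hgen : ∀ v : List (Fin q), v.length = n →
      ∃ (r : List (Fin q)) (m : ℕ), r ≠ [] ∧ r.Nodup ∧ m ≤ f ∧ ApproxPath β m r v) :
    (q : ℝ) ^ n ≤ (q.factorial : ℝ) * q * f * (n : ℝ) ^ (3 * f) * (q : ℝ) ^ (Hq * n) := by
  classical
  have hq0 : 0 < q := by omega
  have hn0 : 0 < n := hn
  have hsurj := Stmt13Aux.decodeD_surjective q n f hq0 hn0 β (le_of_lt hβ0) hgen
  have hcard := Fintype.card_le_of_surjective _ hsurj
  set B := Fintype.card {gs : List.Vector (Option (Fin (q - 1))) n //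
      Stmt13Aux.cnt gs.toList ≤ ⌊β * (n : ℝ)⌋₊} with hB
  have hcardD : Fintype.card (Equiv.Perm (Fin q) × Fin q ×
      List.Vector (Fin n × Fin n × Fin n) f ×
      {gs : List.Vector (Option (Fin (q - 1))) n //
        Stmt13Aux.cnt gs.toList ≤ ⌊β * (n : ℝ)⌋₊})
      = q.factorial * (q * ((n * (n * n)) ^ f * B)) := by
    rw [Fintype.card_prod, Fintype.card_prod, Fintype.card_prod, Fintype.card_perm,
      Fintype.card_fin, card_vector, Fintype.card_prod, Fintype.card_prod,
      Fintype.card_fin, hB]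
  have hBall : (B : ℝ) ≤ (q : ℝ) ^ (Hq * n) :=
    Stmt13Aux.ball_card_le n hq β Hq hβ0 hβ1 hHq
  have h1 : ((q : ℝ)) ^ n ≤ (q.factorial : ℝ) *
      ((q : ℝ) * (((n : ℝ) * ((n : ℝ) * (n : ℝ))) ^ f * (B : ℝ))) := by
    rw [card_vector, Fintype.card_fin, hcardD] at hcard
    exact_mod_cast hcard
  have h1f : (1 : ℝ) ≤ (f : ℝ) := by exact_mod_cast hf
  calc (q : ℝ) ^ n ≤ (q.factorial : ℝ) *
      ((q : ℝ) * (((n : ℝ) * ((n : ℝ) * (n : ℝ))) ^ f * (B : ℝ))) := h1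
    _ = (q.factorial : ℝ) * q * (n : ℝ) ^ (3 * f) * (B : ℝ) := by ring
    _ ≤ (q.factorial : ℝ) * q * (n : ℝ) ^ (3 * f) * ((q : ℝ) ^ (Hq * n)) := by
        gcongr
    _ ≤ (q.factorial : ℝ) * q * f * (n : ℝ) ^ (3 * f) * ((q : ℝ) ^ (Hq * n)) := by
        have hX : (0 : ℝ) ≤ (q.factorial : ℝ) * q * (n : ℝ) ^ (3 * f)
            * ((q : ℝ) ^ (Hq * n)) := by positivity
        nlinarith [mul_le_mul_of_nonneg_left h1f hX]
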